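/- Let n ≥ 1 and N = {1,…,n}. Suppose F assigns to every set function μ : P(N) → ℝ a function F_μ : ℝⁿ → ℝ. Then F satisfies (LM), (In), (PW) and (weak SPL) if and only if F_μ coincides with the discrete Choquet integral C_μ; precisely: (a) if F satisfies (LM), (In), (PW) and (weak SPL), then F_μ(x) = C_μ(x) for every set function μ with μ(∅) = 0 and every x ∈ ℝⁿ; (b) conversely, the family μ ↦ C_μ satisfies (LM), (In), (PW) and (weak SPL). -/

import Mathlib

/-- The vector in ℝⁿ equal to `s` on coordinates in `A` and `t` elsewhere. -/
def indVec {n : ℕ} (A : Finset (Fin n)) (s t : ℝ) : Fin n → ℝ :=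
  fun i => if i ∈ A then s else t

/-- The Choquet sum of `x` w.r.t. the set function `μ` along the permutation `τ`:
`∑ i, x (τ i) * (μ {τ(i), …, τ(n)} - μ {τ(i+1), …, τ(n)})`. -/
def choquetSum {n : ℕ} (μ : Finset (Fin n) → ℝ) (x : Fin n → ℝ)
    (τ : Equiv.Perm (Fin n)) : ℝ :=
  ∑ i : Fin n, x (τ i) * (μ ((Finset.Ici i).image τ) - μ ((Finset.Ioi i).image τ))

/-- The discrete Choquet integral of `x` w.r.t. the set function `μ`, computed
along a permutation putting `x` in nondecreasing order. -/
noncomputable def choquet {n : ℕ} (μ : Finset (Fin n) → ℝ) (x : Fin n → ℝ) : ℝ :=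
  choquetSum μ x (Tuple.sort x)

/-- Axiom (LM): linearity with respect to the measure. -/
def LMaxiom {n : ℕ} (F : (Finset (Fin n) → ℝ) → (Fin n → ℝ) → ℝ) : Prop :=
  ∀ μ μ' : Finset (Fin n) → ℝ, ∀ γ δ : ℝ, ∀ x : Fin n → ℝ,
    F (fun A => γ * μ A + δ * μ' A) x = γ * F μ x + δ * F μ' x

/-- Axiom (In): for every fuzzy measure `μ`, `F μ` is nondecreasing in each coordinate. -/
def InAxiom {n : ℕ} (F : (Finset (Fin n) → ℝ) → (Fin n → ℝ) → ℝ) : Prop :=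
  ∀ μ : Finset (Fin n) → ℝ, μ ∅ = 0 → μ Finset.univ = 1 →
    (∀ A B : Finset (Fin n), A ⊆ B → μ A ≤ μ B) →
    ∀ x x' : Fin n → ℝ, (∀ i, x i ≤ x' i) → F μ x ≤ F μ x'

/-- Axiom (PW): properly weighted. -/
def PWaxiom {n : ℕ} (F : (Finset (Fin n) → ℝ) → (Fin n → ℝ) → ℝ) : Prop :=
  ∀ μ : Finset (Fin n) → ℝ, μ ∅ = 0 → μ Finset.univ = 1 →
    ∀ A : Finset (Fin n), F μ (indVec A 1 0) = μ A

/-- Axiom (weak SPL): stability for the admissible positive linear transformations. -/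
def wSPLaxiom {n : ℕ} (F : (Finset (Fin n) → ℝ) → (Fin n → ℝ) → ℝ) : Prop :=
  ∀ μ : Finset (Fin n) → ℝ, μ ∅ = 0 → μ Finset.univ = 1 →
    ∀ A : Finset (Fin n), ∀ α β : ℝ, 0 < α →
      F μ (indVec A (α + β) β) = α * F μ (indVec A 1 0) + β


open Finset

variable {n : ℕ}

noncomputable def mob (μ : Finset (Fin n) → ℝ) (B : Finset (Fin n)) : ℝ :=
  ∑ C ∈ B.powerset, (-1 : ℝ) ^ (B.card - C.card) * μ C

lemma mob_empty (μ : Finset (Fin n) → ℝ) : mob μ ∅ = μ ∅ := by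
  simp [mob]

lemma neg_one_powerset (t : Finset (Fin n)) :
    ∑ D ∈ t.powerset, (-1 : ℝ) ^ D.card = if t = ∅ then 1 else 0 := by
  have := Finset.sum_powerset_neg_one_pow_card (x := t)
  have h2 : ((∑ m ∈ t.powerset, (-1 : ℤ) ^ m.card : ℤ) : ℝ)
      = ∑ D ∈ t.powerset, (-1 : ℝ) ^ D.card := by push_cast; rfl
  rw [← h2, this]
  split <;> norm_num

lemma mob_inversion (μ : Finset (Fin n) → ℝ) (A : Finset (Fin n)) :
    ∑ B ∈ A.powerset, mob μ B = μ A := by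
  classical
  unfold mob
  rw [Finset.sum_comm' (t' := A.powerset)
    (s' := fun C => A.powerset.filter (fun B => C ⊆ B))
    (by intro B C
        simp only [mem_powerset, mem_filter]
        constructor
        · intro h; exact ⟨h, h.2.trans h.1⟩
        · intro h; exact h.1)]
  have key : ∀ C ∈ A.powerset,
      ∑ B ∈ A.powerset.filter (fun B => C ⊆ B), (-1 : ℝ) ^ (B.card - C.card) * μ C
        = (if C = A then 1 else 0) * μ C := by
    intro C hC
    rw [mem_powerset] at hC
    rw [← Finset.sum_mul]
    congr 1
    rw [Finset.sum_nbij' (i := fun B => B \ C) (j := fun D => C ∪ D)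
      (s := A.powerset.filter (fun B => C ⊆ B)) (t := (A \ C).powerset)
      (f := fun B => (-1 : ℝ) ^ (B.card - C.card)) (g := fun D => (-1 : ℝ) ^ D.card)]
    · rw [neg_one_powerset]
      by_cases h : C = A
      · simp [h]
      · rw [if_neg (fun hAC : A \ C = ∅ =>
          h (hC.antisymm (sdiff_eq_empty_iff_subset.mp hAC))), if_neg h]
    · intro B hB; rw [mem_filter, mem_powerset] at hB
      rw [mem_powerset]; exact sdiff_subset_sdiff hB.1 (Subset.refl _)
    · intro D hD; rw [mem_powerset] at hD
      rw [mem_filter, mem_powerset]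
      exact ⟨union_subset hC (hD.trans (sdiff_subset)), subset_union_left⟩
    · intro B hB; rw [mem_filter, mem_powerset] at hB
      exact union_sdiff_of_subset hB.2
    · intro D hD; rw [mem_powerset] at hD
      exact union_sdiff_cancel_left ((sdiff_disjoint.mono_left hD).symm)
    · intro B hB; rw [mem_filter, mem_powerset] at hB
      congr 1
      rw [card_sdiff_of_subset hB.2]
  rw [Finset.sum_congr rfl key]
  simp [ite_mul, Finset.sum_ite_eq' A.powerset A (fun C => μ C)]

/-- Unanimity game. -/
def uGame (B : Finset (Fin n)) : Finset (Fin n) → ℝ :=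
  fun A => if B ⊆ A then 1 else 0

/-- Total extension of the minimum over a finite set of coordinates. -/
noncomputable def minOnF (B : Finset (Fin n)) (x : Fin n → ℝ) : ℝ :=
  if h : B.Nonempty then B.inf' h x else 0

lemma minOn_eq {B : Finset (Fin n)} (h : B.Nonempty) (x : Fin n → ℝ) :
    minOnF B x = B.inf' h x := by simp [minOnF, h]

lemma decomposition (μ : Finset (Fin n) → ℝ) (A : Finset (Fin n)) (hA : A ⊆ univ) :
    μ A = ∑ B ∈ (univ : Finset (Fin n)).powerset, mob μ B * uGame B A := by
  classical
  have : ∑ B ∈ (univ : Finset (Fin n)).powerset, mob μ B * uGame B A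
      = ∑ B ∈ A.powerset, mob μ B := by
    rw [← Finset.sum_filter_add_sum_filter_not ((univ : Finset (Fin n)).powerset)
      (fun B => B ⊆ A)]
    have h1 : (univ : Finset (Fin n)).powerset.filter (fun B => B ⊆ A) = A.powerset := by
      ext B; simp [mem_powerset]
    rw [h1]
    have h2 : ∀ B ∈ A.powerset, mob μ B * uGame B A = mob μ B := by
      intro B hB; rw [mem_powerset] at hB; simp [uGame, hB]
    have h3 : ∀ B ∈ (univ : Finset (Fin n)).powerset.filter (fun B => ¬ B ⊆ A),
        mob μ B * uGame B A = 0 := by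
      intro B hB; rw [mem_filter] at hB; simp [uGame, hB.2]
    rw [Finset.sum_congr rfl h2, Finset.sum_congr rfl h3]
    simp
  rw [this, mob_inversion]

lemma choquetSum_linear {ι : Type*} (s : Finset ι) (c : ι → ℝ)
    (ν : ι → Finset (Fin n) → ℝ) (x : Fin n → ℝ) (τ : Equiv.Perm (Fin n)) :
    choquetSum (fun A => ∑ B ∈ s, c B * ν B A) x τ
      = ∑ B ∈ s, c B * choquetSum (ν B) x τ := by
  unfold choquetSum
  have : ∀ i : Fin n, x (τ i) * ((∑ B ∈ s, c B * ν B ((Finset.Ici i).image τ))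
      - (∑ B ∈ s, c B * ν B ((Finset.Ioi i).image τ)))
      = ∑ B ∈ s, c B * (x (τ i) * (ν B ((Finset.Ici i).image τ)
          - ν B ((Finset.Ioi i).image τ))) := by
    intro i
    rw [← Finset.sum_sub_distrib, Finset.mul_sum]
    exact Finset.sum_congr rfl fun B _ => by ring
  rw [Finset.sum_congr rfl fun i _ => this i, Finset.sum_comm]
  exact Finset.sum_congr rfl fun B _ => (Finset.mul_sum _ _ _).symm

lemma choquet_linear {ι : Type*} (s : Finset ι) (c : ι → ℝ)
    (ν : ι → Finset (Fin n) → ℝ) (x : Fin n → ℝ) :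
    choquet (fun A => ∑ B ∈ s, c B * ν B A) x = ∑ B ∈ s, c B * choquet (ν B) x := by
  unfold choquet; exact choquetSum_linear s c ν x _

lemma choquet_uGame {B : Finset (Fin n)} (hB : B.Nonempty) (x : Fin n → ℝ) :
    choquet (uGame B) x = B.inf' hB x := by
  classical
  set τ := Tuple.sort x with hτ
  have hmono : Monotone (x ∘ τ) := Tuple.monotone_sort x
  have hBim : (B.image τ.symm).Nonempty := hB.image _
  set k := (B.image τ.symm).min' hBim with hk
  have hmem : ∀ (i : Fin n) (S : Finset (Fin n)),
      B ⊆ S.image τ ↔ ∀ j ∈ B, τ.symm j ∈ S := by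
    intro i S
    constructor
    · intro h j hj
      obtain ⟨p, hp, hpj⟩ := Finset.mem_image.mp (h hj)
      rwa [← hpj, Equiv.symm_apply_apply]
    · intro h j hj
      exact Finset.mem_image.mpr ⟨τ.symm j, h j hj, Equiv.apply_symm_apply τ j⟩
  have hc : ∀ i : Fin n, uGame B ((Finset.Ici i).image τ) = if i ≤ k then 1 else 0 := by
    intro i
    unfold uGame
    congr 1
    rw [hmem i, eq_iff_iff]
    constructor
    · intro h
      have := h (τ k) ?_
      · rwa [Equiv.symm_apply_apply, Finset.mem_Ici] at this
      · have : k ∈ B.image τ.symm := Finset.min'_mem _ _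
        obtain ⟨j, hj, hjk⟩ := Finset.mem_image.mp this
        rw [← hjk, Equiv.apply_symm_apply]; exact hj
    · intro h j hj
      rw [Finset.mem_Ici]
      exact h.trans (Finset.min'_le _ _ (Finset.mem_image_of_mem _ hj))
  have hd : ∀ i : Fin n, uGame B ((Finset.Ioi i).image τ) = if i < k then 1 else 0 := by
    intro i
    unfold uGame
    congr 1
    rw [hmem i, eq_iff_iff]
    constructor
    · intro h
      have hkB : k ∈ B.image τ.symm := Finset.min'_mem _ _
      obtain ⟨j, hj, hjk⟩ := Finset.mem_image.mp hkB
      have := h j hj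
      rw [hjk, Finset.mem_Ioi] at this
      exact this
    · intro h j hj
      rw [Finset.mem_Ioi]
      exact h.trans_le (Finset.min'_le _ _ (Finset.mem_image_of_mem _ hj))
  have hsum : choquet (uGame B) x = x (τ k) := by
    unfold choquet choquetSum
    rw [← hτ]
    rw [Finset.sum_eq_single k]
    · rw [hc, hd, if_pos (le_refl k), if_neg (lt_irrefl k)]
      ring
    · intro i _ hik
      rw [hc, hd]
      rcases lt_or_gt_of_ne hik with h | h
      · rw [if_pos h.le, if_pos h]; ring
      · rw [if_neg (not_le.mpr h), if_neg (not_lt.mpr h.le)]; ring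
    · intro h; exact absurd (Finset.mem_univ k) h
  rw [hsum]
  apply le_antisymm
  · apply Finset.le_inf'
    intro j hj
    have h1 : k ≤ τ.symm j := Finset.min'_le _ _ (Finset.mem_image_of_mem _ hj)
    have := hmono h1
    simpa using this
  · have hkB : k ∈ B.image τ.symm := Finset.min'_mem _ _
    obtain ⟨j, hj, hjk⟩ := Finset.mem_image.mp hkB
    have : τ k = j := by rw [← hjk, Equiv.apply_symm_apply]
    rw [this]
    exact Finset.inf'_le _ hj

/-- The master formula (★). -/
lemma choquet_star (μ : Finset (Fin n) → ℝ) (h0 : μ ∅ = 0) (x : Fin n → ℝ) :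
    choquet μ x = ∑ B ∈ (univ : Finset (Fin n)).powerset, mob μ B * minOnF B x := by
  classical
  have hμ : μ = fun A => ∑ B ∈ (univ : Finset (Fin n)).powerset, mob μ B * uGame B A := by
    funext A; exact decomposition μ A (subset_univ A)
  conv_lhs => rw [hμ]
  rw [choquet_linear]
  refine Finset.sum_congr rfl fun B _ => ?_
  rcases B.eq_empty_or_nonempty with rfl | hB
  · rw [mob_empty, h0]; ring
  · rw [choquet_uGame hB, minOn_eq hB]

lemma mob_total (μ : Finset (Fin n) → ℝ) :
    ∑ B ∈ (univ : Finset (Fin n)).powerset, mob μ B = μ univ :=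
  mob_inversion μ univ

lemma minOn_indVec {B : Finset (Fin n)} (hB : B.Nonempty) (A : Finset (Fin n))
    {s t : ℝ} (hts : t ≤ s) :
    minOnF B (indVec A s t) = if B ⊆ A then s else t := by
  rw [minOn_eq hB]
  by_cases h : B ⊆ A
  · rw [if_pos h]
    apply le_antisymm
    · obtain ⟨j, hj⟩ := hB
      exact (Finset.inf'_le _ hj).trans_eq (by simp [indVec, h hj])
    · apply Finset.le_inf'
      intro j hj
      simp [indVec, h hj]
  · rw [if_neg h]
    obtain ⟨j, hj, hjA⟩ := Finset.not_subset.mp h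
    apply le_antisymm
    · exact (Finset.inf'_le _ hj).trans_eq (by simp [indVec, hjA])
    · apply Finset.le_inf'
      intro i _
      unfold indVec
      split <;> [exact hts; exact le_refl t]

lemma choquet_indVec (μ : Finset (Fin n) → ℝ) (h0 : μ ∅ = 0) (h1 : μ univ = 1)
    (A : Finset (Fin n)) {s t : ℝ} (hts : t ≤ s) :
    choquet μ (indVec A s t) = (s - t) * μ A + t := by
  classical
  rw [choquet_star μ h0]
  have key : ∀ B ∈ (univ : Finset (Fin n)).powerset,
      mob μ B * minOnF B (indVec A s t)
        = mob μ B * t + (s - t) * (mob μ B * uGame B A) := by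
    intro B _
    rcases B.eq_empty_or_nonempty with rfl | hB
    · rw [mob_empty, h0]; ring
    · rw [minOn_indVec hB A hts]
      unfold uGame
      by_cases h : B ⊆ A
      · rw [if_pos h, if_pos h]; ring
      · rw [if_neg h, if_neg h]; ring
  rw [Finset.sum_congr rfl key, Finset.sum_add_distrib, ← Finset.sum_mul, mob_total, h1,
    ← Finset.mul_sum, ← decomposition μ A (subset_univ A)]
  ring

lemma indicator_antitone (c : ℝ) : Antitone (fun t : ℝ => if t ≤ c then (1 : ℝ) else 0) := by
  intro t1 t2 h
  simp only []
  by_cases h2 : t2 ≤ c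
  · rw [if_pos h2, if_pos (h.trans h2)]
  · rw [if_neg h2]
    split <;> norm_num

lemma indicator_integrable (c a b : ℝ) :
    IntervalIntegrable (fun t : ℝ => if t ≤ c then (1 : ℝ) else 0) MeasureTheory.volume a b :=
  ((indicator_antitone c).antitoneOn _).intervalIntegrable

lemma indicator_integral {a b c : ℝ} (hac : a ≤ c) (hcb : c ≤ b) :
    ∫ t in a..b, (if t ≤ c then (1 : ℝ) else 0) = c - a := by
  have h1 : (fun t : ℝ => if t ≤ c then (1 : ℝ) else 0)
      = fun t => Set.indicator {x : ℝ | x ≤ c} (fun _ => (1 : ℝ)) t := by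
    funext t
    rw [Set.indicator_apply]
    rfl
  rw [h1, intervalIntegral.integral_indicator ⟨hac, hcb⟩]
  simp

/-- Auxiliary per-`B` integrand. -/
noncomputable def phiFun (B : Finset (Fin n)) (x : Fin n → ℝ) : ℝ → ℝ :=
  fun t => if B.Nonempty then (if t ≤ minOnF B x then (1 : ℝ) else 0) else 1

lemma phiFun_integrable (B : Finset (Fin n)) (x : Fin n → ℝ) (a b : ℝ) :
    IntervalIntegrable (phiFun B x) MeasureTheory.volume a b := by
  unfold phiFun
  by_cases h : B.Nonempty
  · simp only [if_pos h]
    exact indicator_integrable _ a b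
  · simp only [if_neg h]
    exact intervalIntegrable_const

lemma level_eq (μ : Finset (Fin n) → ℝ) (x : Fin n → ℝ) (t : ℝ) :
    μ (Finset.univ.filter fun j => t ≤ x j)
      = ∑ B ∈ (univ : Finset (Fin n)).powerset, mob μ B * phiFun B x t := by
  classical
  rw [decomposition μ (Finset.univ.filter fun j => t ≤ x j) (filter_subset _ _)]
  refine Finset.sum_congr rfl fun B _ => ?_
  congr 1
  unfold uGame phiFun
  rcases B.eq_empty_or_nonempty with rfl | hB
  · simp
  · rw [if_pos hB]
    congr 1
    rw [eq_iff_iff]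
    constructor
    · intro h
      rw [minOn_eq hB]
      apply Finset.le_inf'
      intro j hj
      exact (Finset.mem_filter.mp (h hj)).2
    · intro h j hj
      rw [Finset.mem_filter]
      refine ⟨Finset.mem_univ j, h.trans ?_⟩
      rw [minOn_eq hB]
      exact Finset.inf'_le _ hj

lemma choquet_repr (μ : Finset (Fin n) → ℝ) (h0 : μ ∅ = 0) (h1 : μ univ = 1)
    (x : Fin n → ℝ) (a b : ℝ) (ha : ∀ i, a ≤ x i) (hb : ∀ i, x i ≤ b) (hab : a ≤ b) :
    choquet μ x = a + ∫ t in a..b, μ (Finset.univ.filter fun j => t ≤ x j) := by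
  classical
  have hInt : ∫ t in a..b, μ (Finset.univ.filter fun j => t ≤ x j)
      = ∑ B ∈ (univ : Finset (Fin n)).powerset, mob μ B * ∫ t in a..b, phiFun B x t := by
    rw [intervalIntegral.integral_congr (g := fun t =>
        ∑ B ∈ (univ : Finset (Fin n)).powerset, mob μ B * phiFun B x t)
        (fun t _ => level_eq μ x t)]
    rw [intervalIntegral.integral_finset_sum
      (fun B _ => (phiFun_integrable B x a b).const_mul (mob μ B))]
    exact Finset.sum_congr rfl fun B _ => intervalIntegral.integral_const_mul _ _
  rw [hInt]
  have key : ∀ B ∈ (univ : Finset (Fin n)).powerset,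
      mob μ B * ∫ t in a..b, phiFun B x t = mob μ B * minOnF B x - mob μ B * a := by
    intro B _
    rcases B.eq_empty_or_nonempty with rfl | hB
    · rw [mob_empty, h0]; ring
    · have hmin_a : a ≤ minOnF B x := by
        rw [minOn_eq hB]
        obtain ⟨j, hj, hjeq⟩ := Finset.exists_mem_eq_inf' hB x
        rw [hjeq]; exact ha j
      have hmin_b : minOnF B x ≤ b := by
        rw [minOn_eq hB]
        obtain ⟨j, hj, hjeq⟩ := Finset.exists_mem_eq_inf' hB x
        rw [hjeq]; exact hb j
      unfold phiFun
      simp only [if_pos hB]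
      rw [indicator_integral hmin_a hmin_b]
      ring
  rw [Finset.sum_congr rfl key, Finset.sum_sub_distrib, ← Finset.sum_mul, mob_total, h1,
    choquet_star μ h0]
  ring

lemma choquet_mono (hn : 1 ≤ n) (μ : Finset (Fin n) → ℝ) (h0 : μ ∅ = 0)
    (h1 : μ univ = 1) (hmono : ∀ A B : Finset (Fin n), A ⊆ B → μ A ≤ μ B)
    (x x' : Fin n → ℝ) (hx : ∀ i, x i ≤ x' i) : choquet μ x ≤ choquet μ x' := by
  classical
  have i0 : Fin n := ⟨0, hn⟩
  have huniv : (univ : Finset (Fin n)).Nonempty := ⟨i0, mem_univ i0⟩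
  set a := univ.inf' huniv x with ha_def
  set b := univ.sup' huniv x' with hb_def
  have ha : ∀ i, a ≤ x i := fun i => Finset.inf'_le _ (mem_univ i)
  have ha' : ∀ i, a ≤ x' i := fun i => (ha i).trans (hx i)
  have hb' : ∀ i, x' i ≤ b := fun i => Finset.le_sup' _ (mem_univ i)
  have hb : ∀ i, x i ≤ b := fun i => (hx i).trans (hb' i)
  have hab : a ≤ b := (ha i0).trans (hb i0)
  rw [choquet_repr μ h0 h1 x a b ha hb hab, choquet_repr μ h0 h1 x' a b ha' hb' hab]
  have hint : ∀ y : Fin n → ℝ,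
      IntervalIntegrable (fun t => μ (Finset.univ.filter fun j => t ≤ y j))
        MeasureTheory.volume a b := by
    intro y
    apply AntitoneOn.intervalIntegrable
    intro t1 _ t2 _ h
    apply hmono
    intro j hj
    rw [Finset.mem_filter] at hj ⊢
    exact ⟨hj.1, h.trans hj.2⟩
  have hpt : ∀ t ∈ Set.Icc a b,
      μ (Finset.univ.filter fun j => t ≤ x j) ≤ μ (Finset.univ.filter fun j => t ≤ x' j) := by
    intro t _
    apply hmono
    intro j hj
    rw [Finset.mem_filter] at hj ⊢
    exact ⟨hj.1, hj.2.trans (hx j)⟩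
  exact add_le_add (le_refl a) (intervalIntegral.integral_mono_on hab (hint x) (hint x') hpt)


section Fside
variable {F : (Finset (Fin n) → ℝ) → (Fin n → ℝ) → ℝ}

lemma F_zero (hLM : LMaxiom F) (x : Fin n → ℝ) : F (fun _ => 0) x = 0 := by
  have := hLM (fun _ => 0) (fun _ => 0) 0 0 x
  simpa using this

lemma F_linear (hLM : LMaxiom F) {ι : Type*} (s : Finset ι) (c : ι → ℝ)
    (ν : ι → Finset (Fin n) → ℝ) (x : Fin n → ℝ) :
    F (fun A => ∑ B ∈ s, c B * ν B A) x = ∑ B ∈ s, c B * F (ν B) x := by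
  classical
  induction s using Finset.induction_on with
  | empty => simpa using F_zero hLM x
  | insert _ _ hae ih =>
      rename_i e s'
      have h1 : (fun A => ∑ B ∈ insert e s', c B * ν B A)
          = fun A => c e * ν e A + 1 * ((fun A' => ∑ B ∈ s', c B * ν B A') A) := by
        funext A
        rw [Finset.sum_insert hae]
        ring
      rw [h1, hLM, ih, Finset.sum_insert hae]
      ring

lemma uGame_fuzzy {B : Finset (Fin n)} (hB : B.Nonempty) :
    uGame B ∅ = 0 ∧ uGame B univ = 1 ∧
      ∀ A A' : Finset (Fin n), A ⊆ A' → uGame B A ≤ uGame B A' := by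
  refine ⟨?_, ?_, ?_⟩
  · unfold uGame
    rw [if_neg]
    intro h
    exact hB.ne_empty (subset_empty.mp h)
  · unfold uGame
    rw [if_pos (subset_univ B)]
  · intro A A' hAA
    unfold uGame
    by_cases h : B ⊆ A
    · rw [if_pos h, if_pos (h.trans hAA)]
    · rw [if_neg h]
      split <;> norm_num

lemma F_const (hPW : PWaxiom F) (hSPL : wSPLaxiom F) (μ : Finset (Fin n) → ℝ)
    (h0 : μ ∅ = 0) (h1 : μ univ = 1) (c : ℝ) : F μ (fun _ => c) = c := by
  have h := hSPL μ h0 h1 univ 1 (c - 1) one_pos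
  have e1 : indVec (univ : Finset (Fin n)) (1 + (c - 1)) (c - 1) = fun _ => c := by
    funext i; simp [indVec]
  rw [e1, hPW μ h0 h1 univ] at h
  rw [h, h1]
  ring

lemma F_two_valued (hPW : PWaxiom F) (hSPL : wSPLaxiom F) (μ : Finset (Fin n) → ℝ)
    (h0 : μ ∅ = 0) (h1 : μ univ = 1) (A : Finset (Fin n)) {s t : ℝ} (hts : t ≤ s) :
    F μ (indVec A s t) = (s - t) * μ A + t := by
  rcases eq_or_lt_of_le hts with rfl | hlt
  · have e1 : indVec A t t = fun _ => t := by
      funext i; simp [indVec]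
    rw [e1, F_const hPW hSPL μ h0 h1 t]
    ring
  · have h := hSPL μ h0 h1 A (s - t) t (by linarith)
    have e1 : s - t + t = s := by ring
    rw [e1, hPW μ h0 h1 A] at h
    rw [h]

lemma F_uGame (hLM : LMaxiom F) (hIn : InAxiom F) (hPW : PWaxiom F) (hSPL : wSPLaxiom F)
    {B : Finset (Fin n)} (hB : B.Nonempty) (x : Fin n → ℝ) :
    F (uGame B) x = B.inf' hB x := by
  classical
  obtain ⟨hu0, hu1, humono⟩ := uGame_fuzzy hB
  obtain ⟨j0, hj0⟩ := id hB
  have huniv : (univ : Finset (Fin n)).Nonempty := ⟨j0, mem_univ j0⟩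
  set m := B.inf' hB x with hm
  set a := univ.inf' huniv x with ha_def
  set b := univ.sup' huniv x with hb_def
  have ham : a ≤ m := by
    obtain ⟨j, hj, hjeq⟩ := Finset.exists_mem_eq_inf' hB x
    rw [hm, hjeq]
    exact Finset.inf'_le _ (mem_univ j)
  have hmb : m ≤ b := by
    obtain ⟨j, hj, hjeq⟩ := Finset.exists_mem_eq_inf' hB x
    rw [hm, hjeq]
    exact Finset.le_sup' _ (mem_univ j)
  apply le_antisymm
  · -- upper bound
    obtain ⟨j, hj, hjeq⟩ := Finset.exists_mem_eq_inf' hB x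
    have hz : ∀ i, x i ≤ indVec (univ.erase j) b m i := by
      intro i
      unfold indVec
      by_cases h : i ∈ univ.erase j
      · rw [if_pos h]
        exact Finset.le_sup' _ (mem_univ i)
      · rw [if_neg h]
        have : i = j := by
          by_contra hne
          exact h (Finset.mem_erase.mpr ⟨hne, mem_univ i⟩)
        rw [this, ← hjeq]
    have hFz : F (uGame B) (indVec (univ.erase j) b m) = m := by
      rw [F_two_valued hPW hSPL _ hu0 hu1 _ hmb]
      have : uGame B (univ.erase j) = 0 := by
        unfold uGame
        rw [if_neg]
        intro h
        exact (Finset.mem_erase.mp (h hj)).1 rfl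
      rw [this]
      ring
    calc F (uGame B) x ≤ F (uGame B) (indVec (univ.erase j) b m) :=
          hIn (uGame B) hu0 hu1 humono _ _ hz
      _ = m := hFz
  · -- lower bound
    have hy : ∀ i, indVec B m a i ≤ x i := by
      intro i
      unfold indVec
      by_cases h : i ∈ B
      · rw [if_pos h]
        exact Finset.inf'_le _ h
      · rw [if_neg h]
        exact Finset.inf'_le _ (mem_univ i)
    have hFy : F (uGame B) (indVec B m a) = m := by
      rw [F_two_valued hPW hSPL _ hu0 hu1 _ ham]
      have : uGame B B = 1 := by
        unfold uGame
        rw [if_pos (Finset.Subset.refl B)]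
      rw [this]
      ring
    calc m = F (uGame B) (indVec B m a) := hFy.symm
      _ ≤ F (uGame B) x := hIn (uGame B) hu0 hu1 humono _ _ hy

end Fside

theorem stmt0 (n : ℕ) (hn : 1 ≤ n)
    (F : (Finset (Fin n) → ℝ) → (Fin n → ℝ) → ℝ) :
    ((LMaxiom F ∧ InAxiom F ∧ PWaxiom F ∧ wSPLaxiom F) →
        ∀ μ : Finset (Fin n) → ℝ, μ ∅ = 0 → ∀ x : Fin n → ℝ, F μ x = choquet μ x)
    ∧ (LMaxiom (fun μ : Finset (Fin n) → ℝ => choquet μ)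
        ∧ InAxiom (fun μ : Finset (Fin n) → ℝ => choquet μ)
        ∧ PWaxiom (fun μ : Finset (Fin n) → ℝ => choquet μ)
        ∧ wSPLaxiom (fun μ : Finset (Fin n) → ℝ => choquet μ)) := by
  classical
  constructor
  · rintro ⟨hLM, hIn, hPW, hSPL⟩ μ h0 x
    have hμ : μ = fun A => ∑ B ∈ (univ : Finset (Fin n)).powerset, mob μ B * uGame B A := by
      funext A; exact decomposition μ A (Finset.subset_univ A)
    calc F μ x
        = F (fun A => ∑ B ∈ (univ : Finset (Fin n)).powerset, mob μ B * uGame B A) x := by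
          rw [← hμ]
      _ = ∑ B ∈ (univ : Finset (Fin n)).powerset, mob μ B * F (uGame B) x :=
          F_linear hLM _ _ _ _
      _ = ∑ B ∈ (univ : Finset (Fin n)).powerset, mob μ B * minOnF B x := by
          refine Finset.sum_congr rfl fun B _ => ?_
          rcases B.eq_empty_or_nonempty with rfl | hB
          · rw [mob_empty, h0]; ring
          · rw [F_uGame hLM hIn hPW hSPL hB x, minOn_eq hB]
      _ = choquet μ x := (choquet_star μ h0 x).symm
  · refine ⟨?_, ?_, ?_, ?_⟩
    · -- LM
      intro μ μ' γ δ x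
      show choquet (fun A => γ * μ A + δ * μ' A) x = γ * choquet μ x + δ * choquet μ' x
      have h1 : (fun A => γ * μ A + δ * μ' A)
          = fun A => ∑ B ∈ ({0, 1} : Finset (Fin 2)), (fun i : Fin 2 => if i = 0 then γ else δ) B
              * (fun i : Fin 2 => if i = 0 then μ else μ') B A := by
        funext A
        simp
      rw [h1, choquet_linear]
      simp
    · -- In
      intro μ h0 h1 hmono x x' hx
      exact choquet_mono hn μ h0 h1 hmono x x' hx
    · -- PW
      intro μ h0 h1 A
      show choquet μ (indVec A 1 0) = μ A
      rw [choquet_indVec μ h0 h1 A (by norm_num : (0:ℝ) ≤ 1)]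
      ring
    · -- wSPL
      intro μ h0 h1 A α β hα
      show choquet μ (indVec A (α + β) β) = α * choquet μ (indVec A 1 0) + β
      rw [choquet_indVec μ h0 h1 A (by linarith : β ≤ α + β),
        choquet_indVec μ h0 h1 A (by norm_num : (0:ℝ) ≤ 1)]
      ring
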